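/- (Example 4.2, explicit verification of inequality (4.18)) Let k₁, k₂ > 0, let A = [[0,0],[1,0]] ∈ ℝ^{2×2}, b = (1,0)', and define f(d,x) = (k₁d₁x₁, k₂d₂x₂)' for d = (d₁,d₂) ∈ [−1,1]² and x = (x₁,x₂)' ∈ ℝ². Set S = 1/2 + k₁ + (1/2)(1+k₂)²(k₂+k₁)², P = [[1, 1+k₂],[1+k₂, (1+k₂)²+1]], p = −(1+S+k₂, 1+S(1+k₂))', and q = (√((1+k₂)²+4) − 1 − k₂) / (2 + 2k₂ + 2√((1+k₂)²+4)). Then P is symmetric positive definite, q > 0, and x'P(A + bp')x + x'Pf(d,x) ≤ −q|x|² for all d ∈ [−1,1]² and all x ∈ ℝ². -/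

import Mathlib

open Matrix

noncomputable section

set_option maxHeartbeats 1000000 in
lemma step1_aux (k1 k2 d0 d1 u v : ℝ) (hk1 : 0 < k1) (hk2 : 0 < k2)
    (hd0l : -1 ≤ d0) (hd0u : d0 ≤ 1) (hd1l : -1 ≤ d1) (hd1u : d1 ≤ 1) :
    k1 * d0 * (u - (1 + k2) * v) * u + k2 * d1 * v * ((1 + k2) * u + v)
      ≤ (k1 + 1/2 * (1 + k2) ^ 2 * (k1 + k2) ^ 2) * u ^ 2 + (1/2 + k2) * v ^ 2 := by
  have hk12 : 0 < k1 + k2 := by linarith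
  nlinarith [mul_nonneg hk1.le (sq_nonneg ((1 + k2) * (k1 + k2) * u + d0 * v)),
    mul_nonneg hk2.le (sq_nonneg ((1 + k2) * (k1 + k2) * u - d1 * v)),
    mul_nonneg (mul_nonneg (mul_nonneg hk1.le hk12.le) (by linarith : (0:ℝ) ≤ 1 - d0))
      (sq_nonneg u),
    mul_nonneg (mul_nonneg (mul_nonneg hk2.le hk12.le) (by linarith : (0:ℝ) ≤ 1 - d1))
      (sq_nonneg v),
    mul_nonneg (mul_nonneg (mul_nonneg hk1.le (by linarith : (0:ℝ) ≤ 1 - d0))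
      (by linarith : (0:ℝ) ≤ 1 + d0)) (sq_nonneg v),
    mul_nonneg (mul_nonneg (mul_nonneg hk2.le (by linarith : (0:ℝ) ≤ 1 - d1))
      (by linarith : (0:ℝ) ≤ 1 + d1)) (sq_nonneg v),
    hk12, sq_nonneg u, sq_nonneg v]


set_option maxHeartbeats 1000000 in
/-- **Example 4.2, explicit verification of inequality (4.18)** for the uncertain planar
system `ẋ₁ = k₁d₁x₁ + u`, `ẋ₂ = k₂d₂x₂ + x₁` with `d₁, d₂ ∈ [-1,1]`. -/
theorem example_4_2_ineq_418 (k1 k2 : ℝ) (hk1 : 0 < k1) (hk2 : 0 < k2) :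
    let A : Matrix (Fin 2) (Fin 2) ℝ := !![0, 0; 1, 0]
    let b : Fin 2 → ℝ := ![1, 0]
    let S : ℝ := 1/2 + k1 + 1/2 * (1 + k2) ^ 2 * (k2 + k1) ^ 2
    let P : Matrix (Fin 2) (Fin 2) ℝ := !![1, 1 + k2; 1 + k2, (1 + k2) ^ 2 + 1]
    let p : Fin 2 → ℝ := ![-(1 + S + k2), -(1 + S * (1 + k2))]
    let q : ℝ := (Real.sqrt ((1 + k2) ^ 2 + 4) - 1 - k2)
        / (2 + 2 * k2 + 2 * Real.sqrt ((1 + k2) ^ 2 + 4))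
    P.IsSymm ∧ P.PosDef ∧ 0 < q ∧
    ∀ d : Fin 2 → ℝ, d 0 ∈ Set.Icc (-1:ℝ) 1 → d 1 ∈ Set.Icc (-1:ℝ) 1 →
    ∀ x : Fin 2 → ℝ,
      x ⬝ᵥ P.mulVec ((A + vecMulVec b p).mulVec x)
          + x ⬝ᵥ P.mulVec ![k1 * d 0 * x 0, k2 * d 1 * x 1]
        ≤ -q * ((x 0) ^ 2 + (x 1) ^ 2) := by
  intro A b S P p q
  set r : ℝ := Real.sqrt ((1 + k2) ^ 2 + 4) with hrdef
  have hr2 : r ^ 2 = (1 + k2) ^ 2 + 4 := Real.sq_sqrt (by positivity)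
  have hrpos : 0 < r := Real.sqrt_pos.mpr (by positivity)
  have hrc : 1 + k2 < r := by nlinarith [hr2, hrpos]
  have hden : 0 < 2 + 2 * k2 + 2 * r := by linarith
  have hq : q = ((1 + k2) ^ 2 + 2 - (1 + k2) * r) / 4 := by
    have h1 : q * (2 + 2 * k2 + 2 * r) = r - 1 - k2 := by
      simp only [q]
      field_simp
      rw [← hrdef]
      ring
    have h2 : (((1 + k2) ^ 2 + 2 - (1 + k2) * r) / 4) * (2 + 2 * k2 + 2 * r)
        = r - 1 - k2 := by
      linear_combination (-(1 + k2) / 2) * hr2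
    have := h1.trans h2.symm
    exact mul_right_cancel₀ (ne_of_gt hden) this
  have hqpos : 0 < q := by
    have : q = (r - 1 - k2) / (2 + 2 * k2 + 2 * r) := rfl
    rw [this]
    apply div_pos (by linarith) hden
  refine ⟨?_, ?_, hqpos, ?_⟩
  · ext i j
    fin_cases i <;> fin_cases j <;> simp [P, Matrix.transpose_apply]
  · rw [Matrix.posDef_iff_dotProduct_mulVec]
    constructor
    · ext i j
      fin_cases i <;> fin_cases j <;> simp [P, Matrix.conjTranspose_apply]
    · intro x hx
      have hx' : x 0 ≠ 0 ∨ x 1 ≠ 0 := by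
        by_contra h
        push_neg at h
        apply hx
        ext i
        fin_cases i <;> simp [h.1, h.2]
      simp only [P, Matrix.mulVec, dotProduct, Fin.sum_univ_two, Matrix.cons_val',
        Matrix.cons_val_zero, Matrix.cons_val_one, Matrix.head_cons, Matrix.empty_val',
        Matrix.cons_val_fin_one, Matrix.head_fin_const, Pi.star_apply, star_trivial,
        Matrix.of_apply]
      by_cases hx1 : x 1 = 0
      · have h0 : x 0 ≠ 0 := hx'.resolve_right (fun hh => hh hx1)
        have h02 : 0 < x 0 ^ 2 := by
          rcases h0.lt_or_gt with hh | hh <;> nlinarith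
        simp only [hx1]
        nlinarith [h02]
      · have h12 : 0 < x 1 ^ 2 := by
          rcases (lt_or_gt_of_ne hx1) with hh | hh <;> nlinarith
        nlinarith [h12, sq_nonneg (x 0 + (1 + k2) * x 1)]
  · intro d hd0 hd1 x
    obtain ⟨hd0l, hd0u⟩ := hd0
    obtain ⟨hd1l, hd1u⟩ := hd1
    simp only [A, b, P, p, S, vecMulVec, Matrix.mulVec, dotProduct, Fin.sum_univ_two,
      Matrix.add_apply, Matrix.of_apply, Matrix.cons_val', Matrix.cons_val_zero,
      Matrix.cons_val_one, Matrix.head_cons, Matrix.empty_val', Matrix.cons_val_fin_one,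
      Matrix.head_fin_const]
    set x0 := x 0
    set x1 := x 1
    set d0 := d 0
    set d1 := d 1
    -- eigenvalue bound
    have hcr : 0 < (1 + k2) * (r - (1 + k2)) / 2 := by
      have h := mul_pos (show (0:ℝ) < 1 + k2 by linarith) (sub_pos.mpr hrc)
      linarith
    have hid : ((1 + k2) * (r - (1 + k2)) / 2) *
        ((x0 + (1 + k2) * x1) ^ 2 + x1 ^ 2
          - ((1 + k2) ^ 2 + 2 - (1 + k2) * r) / 2 * (x0 ^ 2 + x1 ^ 2))
        = ((1 + k2) / 2 * ((r - (1 + k2)) * x0 + 2 * x1)) ^ 2 := by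
      linear_combination ((1 + k2) ^ 2 / 4 * x1 ^ 2) * hr2
    have hF : q * (x0 ^ 2 + x1 ^ 2) ≤ (1/2) * ((x0 + (1 + k2) * x1) ^ 2 + x1 ^ 2) := by
      rw [hq]
      nlinarith [hid, sq_nonneg ((1 + k2) / 2 * ((r - (1 + k2)) * x0 + 2 * x1)), hcr]
    have hD := step1_aux k1 k2 d0 d1 (x0 + (1 + k2) * x1) x1 hk1 hk2 hd0l hd0u hd1l hd1u
    linarith [hF, hD]
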